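/- Let P: A → A be an idempotent linear filtration-preserving map on a complete filtered associative algebra A, with A_{1,−} := P(A_1) and A_{1,+} := P̃(A_1) where P̃ = id − P. Then C(x,y) = log(exp(x)exp(y)) restricts to a bijection C_−: A_{1,−} × A_{1,+} → A_1, with inverse D_P(a) = (P(χ(a)), P̃(χ(a))). -/

import Mathlib

open scoped BigOperators
set_option linter.unusedSectionVars false

noncomputable def expS (K : Type*) {A : Type*} [Field K] [CharZero K] [Ring A] [Algebra K A]
    [UniformSpace A] (a : A) : A :=
  ∑' n : ℕ, ((n.factorial : K)⁻¹) • a ^ n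

noncomputable def logS (K : Type*) {A : Type*} [Field K] [CharZero K] [Ring A] [Algebra K A]
    [UniformSpace A] (a : A) : A :=
  ∑' n : ℕ, (((-1 : K) ^ n) * ((n : K) + 1)⁻¹) • (a - 1) ^ (n + 1)

noncomputable def BCHs (K : Type*) {A : Type*} [Field K] [CharZero K] [Ring A] [Algebra K A]
    [UniformSpace A] (x y : A) : A :=
  logS K (expS K x * expS K y) - x - y

/-- A complete decreasing multiplicative filtration defining the topology of `A`. -/
def IsCompleteFiltration (K : Type*) {A : Type*} [Field K] [CharZero K] [Ring A] [Algebra K A]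
    [UniformSpace A] (F : ℕ → Submodule K A) : Prop :=
  F 0 = ⊤ ∧ (∀ n, F (n + 1) ≤ F n) ∧
    (∀ m n : ℕ, ∀ x ∈ F m, ∀ y ∈ F n, x * y ∈ F (m + n)) ∧
    (∀ n, IsOpen ((F n : Set A))) ∧
    (∀ U ∈ nhds (0 : A), ∃ n, ((F n : Set A)) ⊆ U)

variable {K : Type*} [Field K] [CharZero K] {A : Type*} [Ring A] [Algebra K A]
  [UniformSpace A] [CompleteSpace A] [T2Space A] [IsTopologicalRing A]
  [IsUniformAddGroup A]

namespace BCHproof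

variable {F : ℕ → Submodule K A}

theorem Fle (hF : IsCompleteFiltration K F) {m n : ℕ} (h : m ≤ n) : F n ≤ F m := by
  induction h with
  | refl => exact le_rfl
  | step _ ih => exact le_trans (hF.2.1 _) ih

theorem pow_mem (hF : IsCompleteFiltration K F) {x : A} (hx : x ∈ F 1) :
    ∀ k, x ^ k ∈ F k
  | 0 => by simp [hF.1]
  | k + 1 => by
      have := hF.2.2.1 k 1 _ (pow_mem hF hx k) x hx
      simpa [pow_succ] using this

theorem pow_sub_mem (hF : IsCompleteFiltration K F) {x x' : A} (hx : x ∈ F 1) (hx' : x' ∈ F 1)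
    {n : ℕ} (hd : x - x' ∈ F n) : ∀ k, x ^ (k + 1) - x' ^ (k + 1) ∈ F (n + k)
  | 0 => by simpa using hd
  | k + 1 => by
      have h1 : x * (x ^ (k + 1) - x' ^ (k + 1)) ∈ F (1 + (n + k)) :=
        hF.2.2.1 1 (n + k) x hx _ (pow_sub_mem hF hx hx' hd k)
      have h2 : (x - x') * x' ^ (k + 1) ∈ F (n + (k + 1)) :=
        hF.2.2.1 n (k + 1) _ hd _ (pow_mem hF hx' (k + 1))
      have he : 1 + (n + k) = n + (k + 1) := by omega
      rw [he] at h1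
      have : x ^ (k + 1 + 1) - x' ^ (k + 1 + 1) =
          x * (x ^ (k + 1) - x' ^ (k + 1)) + (x - x') * x' ^ (k + 1) := by
        rw [mul_sub, sub_mul, ← pow_succ', ← pow_succ']
        abel
      rw [this]
      exact add_mem h1 h2

theorem summable_of_mem (hF : IsCompleteFiltration K F) {f : ℕ → A} (h : ∀ n, f n ∈ F n) :
    Summable f := by
  rw [summable_iff_vanishing]
  intro e he
  obtain ⟨N, hN⟩ := hF.2.2.2.2 e he
  refine ⟨Finset.range N, fun t ht => hN ?_⟩
  refine Submodule.sum_mem _ fun i hi => Fle hF ?_ (h i)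
  by_contra hlt
  exact (Finset.disjoint_left.1 ht hi) (Finset.mem_range.2 (by omega))

theorem tsum_mem (hF : IsCompleteFiltration K F) {f : ℕ → A} (hs : Summable f) {m : ℕ}
    (h : ∀ n, f n ∈ F m) : ∑' n, f n ∈ F m := by
  have hc : IsClosed ((F m : Set A)) :=
    AddSubgroup.isClosed_of_isOpen (F m).toAddSubgroup (hF.2.2.2.1 m)
  exact hc.mem_of_tendsto hs.hasSum.tendsto_sum_nat
    (Filter.Eventually.of_forall fun n => Submodule.sum_mem _ fun i _ => h i)

/-! ### exponential pieces -/

noncomputable def eterm (K : Type*) {A : Type*} [Field K] [CharZero K] [Ring A] [Algebra K A]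
    (x : A) (n : ℕ) : A := ((n.factorial : K)⁻¹) • x ^ n

theorem eterm_mem (hF : IsCompleteFiltration K F) {x : A} (hx : x ∈ F 1) (n : ℕ) :
    eterm K x n ∈ F n := Submodule.smul_mem _ _ (pow_mem hF hx n)

theorem summable_eterm (hF : IsCompleteFiltration K F) {x : A} (hx : x ∈ F 1) :
    Summable (eterm K x) := summable_of_mem hF (eterm_mem hF hx)

noncomputable def Rr (K : Type*) {A : Type*} [Field K] [CharZero K] [Ring A] [Algebra K A]
    [UniformSpace A] (x : A) : A := ∑' n, eterm K x (n + 2)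

theorem summable_eterm2 (hF : IsCompleteFiltration K F) {x : A} (hx : x ∈ F 1) :
    Summable (fun n => eterm K x (n + 2)) :=
  (summable_nat_add_iff 2).2 (summable_eterm hF hx)

theorem eterm_zero (x : A) : eterm K x 0 = 1 := by simp [eterm]

theorem eterm_one (x : A) : eterm K x 1 = x := by simp [eterm]

theorem exp_eq (hF : IsCompleteFiltration K F) {x : A} (hx : x ∈ F 1) :
    expS K x = 1 + x + Rr K x := by
  have hs : Summable (eterm K x) := summable_eterm hF hx
  have hs1 : Summable (fun n => eterm K x (n + 1)) := (summable_nat_add_iff 1).2 hs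
  have h0 : expS K x = ∑' n, eterm K x n := rfl
  rw [h0, Summable.tsum_eq_zero_add hs, Summable.tsum_eq_zero_add hs1, eterm_zero, eterm_one, Rr, add_assoc]

theorem Rr_mem (hF : IsCompleteFiltration K F) {x : A} (hx : x ∈ F 1) : Rr K x ∈ F 2 :=
  tsum_mem hF (summable_eterm2 hF hx)
    (fun n => Fle hF (by omega) (eterm_mem hF hx (n + 2)))

theorem Rr_sub_mem (hF : IsCompleteFiltration K F) {x x' : A} (hx : x ∈ F 1) (hx' : x' ∈ F 1)
    {n : ℕ} (hd : x - x' ∈ F n) : Rr K x - Rr K x' ∈ F (n + 1) := by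
  rw [Rr, Rr, ← Summable.tsum_sub (summable_eterm2 hF hx) (summable_eterm2 hF hx')]
  refine tsum_mem hF ((summable_eterm2 hF hx).sub (summable_eterm2 hF hx')) fun k => ?_
  have : eterm K x (k + 2) - eterm K x' (k + 2) =
      (((k + 2).factorial : K)⁻¹) • (x ^ (k + 2) - x' ^ (k + 2)) := by
    rw [smul_sub]; rfl
  rw [this]
  exact Submodule.smul_mem _ _ (Fle hF (by omega) (pow_sub_mem hF hx hx' hd (k + 1)))

/-! ### logarithm pieces -/

noncomputable def lterm (K : Type*) {A : Type*} [Field K] [CharZero K] [Ring A] [Algebra K A]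
    (w : A) (n : ℕ) : A := (((-1 : K) ^ n) * ((n : K) + 1)⁻¹) • w ^ (n + 1)

theorem lterm_mem (hF : IsCompleteFiltration K F) {w : A} (hw : w ∈ F 1) (n : ℕ) :
    lterm K w n ∈ F (n + 1) := Submodule.smul_mem _ _ (pow_mem hF hw (n + 1))

theorem summable_lterm (hF : IsCompleteFiltration K F) {w : A} (hw : w ∈ F 1) :
    Summable (lterm K w) :=
  summable_of_mem hF (fun n => Fle hF (by omega) (lterm_mem hF hw n))

noncomputable def Gg (K : Type*) {A : Type*} [Field K] [CharZero K] [Ring A] [Algebra K A]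
    [UniformSpace A] (w : A) : A := ∑' n, lterm K w (n + 1)

theorem summable_lterm1 (hF : IsCompleteFiltration K F) {w : A} (hw : w ∈ F 1) :
    Summable (fun n => lterm K w (n + 1)) := (summable_nat_add_iff 1).2 (summable_lterm hF hw)

theorem lterm_zero (w : A) : lterm K w 0 = w := by simp [lterm]

theorem log_eq (hF : IsCompleteFiltration K F) {w : A} (hw : w ∈ F 1) :
    logS K (1 + w) = w + Gg K w := by
  have h0 : logS K (1 + w) = ∑' n, lterm K w n := by
    rw [logS]
    congr 1
    funext n
    rw [lterm, add_sub_cancel_left]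
  rw [h0, Summable.tsum_eq_zero_add (summable_lterm hF hw), lterm_zero, Gg]

theorem Gg_mem (hF : IsCompleteFiltration K F) {w : A} (hw : w ∈ F 1) : Gg K w ∈ F 2 :=
  tsum_mem hF (summable_lterm1 hF hw)
    (fun n => Fle hF (by omega) (lterm_mem hF hw (n + 1)))

theorem Gg_sub_mem (hF : IsCompleteFiltration K F) {w w' : A} (hw : w ∈ F 1) (hw' : w' ∈ F 1)
    {n : ℕ} (hd : w - w' ∈ F n) : Gg K w - Gg K w' ∈ F (n + 1) := by
  rw [Gg, Gg, ← Summable.tsum_sub (summable_lterm1 hF hw) (summable_lterm1 hF hw')]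
  refine tsum_mem hF ((summable_lterm1 hF hw).sub (summable_lterm1 hF hw')) fun k => ?_
  have : lterm K w (k + 1) - lterm K w' (k + 1) =
      (((-1 : K) ^ (k + 1)) * (((k + 1 : ℕ) : K) + 1)⁻¹) • (w ^ (k + 2) - w' ^ (k + 2)) := by
    rw [smul_sub]; rfl
  rw [this]
  exact Submodule.smul_mem _ _ (Fle hF (by omega) (pow_sub_mem hF hw hw' hd (k + 1)))

/-! ### BCH pieces -/

noncomputable def ee (K : Type*) {A : Type*} [Field K] [CharZero K] [Ring A] [Algebra K A]
    [UniformSpace A] (x : A) : A := expS K x - 1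

theorem ee_eq (hF : IsCompleteFiltration K F) {x : A} (hx : x ∈ F 1) :
    ee K x = x + Rr K x := by
  rw [ee, exp_eq hF hx]; abel

theorem ee_mem (hF : IsCompleteFiltration K F) {x : A} (hx : x ∈ F 1) : ee K x ∈ F 1 := by
  rw [ee_eq hF hx]
  exact add_mem hx (Fle hF (by omega) (Rr_mem hF hx))

theorem ee_sub_mem (hF : IsCompleteFiltration K F) {x x' : A} (hx : x ∈ F 1) (hx' : x' ∈ F 1)
    {n : ℕ} (hd : x - x' ∈ F n) : ee K x - ee K x' ∈ F n := by
  have h : ee K x - ee K x' = (x - x') + (Rr K x - Rr K x') := by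
    rw [ee_eq hF hx, ee_eq hF hx']; abel
  rw [h]
  exact add_mem hd (Fle hF (by omega) (Rr_sub_mem hF hx hx' hd))

noncomputable def ww (K : Type*) {A : Type*} [Field K] [CharZero K] [Ring A] [Algebra K A]
    [UniformSpace A] (x y : A) : A := ee K x + ee K y + ee K x * ee K y

theorem ww_mem (hF : IsCompleteFiltration K F) {x y : A} (hx : x ∈ F 1) (hy : y ∈ F 1) :
    ww K x y ∈ F 1 := by
  exact add_mem (add_mem (ee_mem hF hx) (ee_mem hF hy))
    (Fle hF (Nat.le_succ 1) (hF.2.2.1 1 1 _ (ee_mem hF hx) _ (ee_mem hF hy)))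

theorem exp_mul (x y : A) : expS K x * expS K y = 1 + ww K x y := by
  rw [ww, ee, ee]; noncomm_ring

theorem eemul_sub_mem (hF : IsCompleteFiltration K F) {x x' y y' : A} (hx : x ∈ F 1)
    (hx' : x' ∈ F 1) (hy : y ∈ F 1) (hy' : y' ∈ F 1) {n : ℕ}
    (hdx : x - x' ∈ F n) (hdy : y - y' ∈ F n) :
    ee K x * ee K y - ee K x' * ee K y' ∈ F (n + 1) := by
  have h : ee K x * ee K y - ee K x' * ee K y' =
      (ee K x - ee K x') * ee K y + ee K x' * (ee K y - ee K y') := by noncomm_ring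
  rw [h]
  have h1 : (ee K x - ee K x') * ee K y ∈ F (n + 1) :=
    hF.2.2.1 n 1 _ (ee_sub_mem hF hx hx' hdx) _ (ee_mem hF hy)
  have h2 : ee K x' * (ee K y - ee K y') ∈ F (1 + n) :=
    hF.2.2.1 1 n _ (ee_mem hF hx') _ (ee_sub_mem hF hy hy' hdy)
  rw [Nat.add_comm 1 n] at h2
  exact add_mem h1 h2

theorem ww_sub_mem (hF : IsCompleteFiltration K F) {x x' y y' : A} (hx : x ∈ F 1)
    (hx' : x' ∈ F 1) (hy : y ∈ F 1) (hy' : y' ∈ F 1) {n : ℕ}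
    (hdx : x - x' ∈ F n) (hdy : y - y' ∈ F n) : ww K x y - ww K x' y' ∈ F n := by
  have h : ww K x y - ww K x' y' = (ee K x - ee K x') + (ee K y - ee K y') +
      (ee K x * ee K y - ee K x' * ee K y') := by rw [ww, ww]; abel
  rw [h]
  exact add_mem (add_mem (ee_sub_mem hF hx hx' hdx) (ee_sub_mem hF hy hy' hdy))
    (Fle hF (by omega) (eemul_sub_mem hF hx hx' hy hy' hdx hdy))

theorem C_eq (hF : IsCompleteFiltration K F) {x y : A} (hx : x ∈ F 1) (hy : y ∈ F 1) :
    logS K (expS K x * expS K y) = ww K x y + Gg K (ww K x y) := by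
  rw [exp_mul, log_eq hF (ww_mem hF hx hy)]

theorem C_mem (hF : IsCompleteFiltration K F) {x y : A} (hx : x ∈ F 1) (hy : y ∈ F 1) :
    logS K (expS K x * expS K y) ∈ F 1 := by
  rw [C_eq hF hx hy]
  exact add_mem (ww_mem hF hx hy) (Fle hF (by omega) (Gg_mem hF (ww_mem hF hx hy)))

theorem BCH_eq (hF : IsCompleteFiltration K F) {x y : A} (hx : x ∈ F 1) (hy : y ∈ F 1) :
    BCHs K x y = Rr K x + Rr K y + ee K x * ee K y + Gg K (ww K x y) := by
  rw [BCHs, C_eq hF hx hy, ww, ee_eq hF hx, ee_eq hF hy]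
  abel

theorem BCH_sub_mem (hF : IsCompleteFiltration K F) {x x' y y' : A} (hx : x ∈ F 1)
    (hx' : x' ∈ F 1) (hy : y ∈ F 1) (hy' : y' ∈ F 1) {n : ℕ}
    (hdx : x - x' ∈ F n) (hdy : y - y' ∈ F n) :
    BCHs K x y - BCHs K x' y' ∈ F (n + 1) := by
  rw [BCH_eq hF hx hy, BCH_eq hF hx' hy']
  have h : Rr K x + Rr K y + ee K x * ee K y + Gg K (ww K x y) -
      (Rr K x' + Rr K y' + ee K x' * ee K y' + Gg K (ww K x' y')) =
      (Rr K x - Rr K x') + (Rr K y - Rr K y') +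
      (ee K x * ee K y - ee K x' * ee K y') +
      (Gg K (ww K x y) - Gg K (ww K x' y')) := by abel
  rw [h]
  exact add_mem (add_mem (add_mem (Rr_sub_mem hF hx hx' hdx) (Rr_sub_mem hF hy hy' hdy))
    (eemul_sub_mem hF hx hx' hy hy' hdx hdy))
    (Gg_sub_mem hF (ww_mem hF hx hy) (ww_mem hF hx' hy')
      (ww_sub_mem hF hx hx' hy hy' hdx hdy))

theorem fixed_unique (hF : IsCompleteFiltration K F) (P : A →ₗ[K] A)
    (hP : ∀ n, ∀ x ∈ F n, P x ∈ F n) {a b c : A} (hb1 : b ∈ F 1) (hc1 : c ∈ F 1)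
    (hb : b = a - BCHs K (P b) (b - P b)) (hc : c = a - BCHs K (P c) (c - P c)) : b = c := by
  have key : ∀ n, b - c ∈ F n := by
    intro n
    induction n with
    | zero => rw [hF.1]; trivial
    | succ n ih =>
        have h1 : P b - P c ∈ F n := by
          have := hP n _ ih
          rwa [map_sub] at this
        have h2 : (b - P b) - (c - P c) ∈ F n := by
          have h3 := sub_mem ih h1
          have h4 : (b - c) - (P b - P c) = (b - P b) - (c - P c) := by abel
          rwa [h4] at h3
        have hD := BCH_sub_mem hF (hP 1 b hb1) (hP 1 c hc1)
          (sub_mem hb1 (hP 1 b hb1)) (sub_mem hc1 (hP 1 c hc1)) h1 h2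
        have h5 : b - c = -(BCHs K (P b) (b - P b) - BCHs K (P c) (c - P c)) := by
          conv_lhs => rw [hb, hc]
          abel
        rw [h5]
        exact neg_mem hD
  by_contra hne
  have h0 : b - c ≠ 0 := sub_ne_zero.2 hne
  have hop : IsOpen ({b - c}ᶜ : Set A) := isOpen_compl_singleton
  have h0m : (0 : A) ∈ ({b - c}ᶜ : Set A) := by
    simp only [Set.mem_compl_iff, Set.mem_singleton_iff]
    exact fun h => h0 h.symm
  obtain ⟨n, hn⟩ := hF.2.2.2.2 _ (hop.mem_nhds h0m)
  exact hn (key n) rfl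

end BCHproof

theorem stmt6 (F : ℕ → Submodule K A) (hF : IsCompleteFiltration K F)
    (P : A →ₗ[K] A) (hP : ∀ n, ∀ x ∈ F n, P x ∈ F n)
    (χ : A → A) (hχmem : ∀ a ∈ F 1, χ a ∈ F 1)
    (hχ : ∀ a ∈ F 1, χ a = a - BCHs K (P (χ a)) (χ a - P (χ a)))
    (hPP : ∀ x : A, P (P x) = P x) :
    Set.BijOn (fun p : A × A => logS K (expS K p.1 * expS K p.2))
      (((⇑P '' (F 1 : Set A)) ×ˢ ((fun x => x - P x) '' (F 1 : Set A)))) ((F 1 : Set A)) ∧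
    Set.InvOn (fun a => (P (χ a), χ a - P (χ a)))
      (fun p : A × A => logS K (expS K p.1 * expS K p.2))
      (((⇑P '' (F 1 : Set A)) ×ˢ ((fun x => x - P x) '' (F 1 : Set A)))) ((F 1 : Set A)) := by
  classical
  set S := (⇑P '' (F 1 : Set A)) ×ˢ ((fun x => x - P x) '' (F 1 : Set A)) with hS
  have hmem : ∀ p : A × A, p ∈ S → p.1 ∈ F 1 ∧ p.2 ∈ F 1 ∧ P p.1 = p.1 ∧ P p.2 = 0 := by
    rintro ⟨x, y⟩ ⟨⟨u, hu, rfl⟩, ⟨v, hv, rfl⟩⟩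
    refine ⟨hP 1 u hu, sub_mem hv (hP 1 v hv), hPP u, ?_⟩
    simp only [map_sub]
    rw [hPP v, sub_self]
  have hCdef : ∀ x y : A, logS K (expS K x * expS K y) = x + y + BCHs K x y := by
    intro x y; rw [BCHs]; abel
  have hCmem : ∀ p ∈ S, logS K (expS K p.1 * expS K p.2) ∈ F 1 := fun p hp =>
    BCHproof.C_mem hF (hmem p hp).1 (hmem p hp).2.1
  have hMapsC : Set.MapsTo (fun p : A × A => logS K (expS K p.1 * expS K p.2))
      S ((F 1 : Set A)) := fun p hp => hCmem p hp
  have hMapsD : Set.MapsTo (fun a => (P (χ a), χ a - P (χ a))) ((F 1 : Set A)) S := by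
    intro a ha
    exact ⟨⟨χ a, hχmem a ha, rfl⟩, ⟨χ a, hχmem a ha, rfl⟩⟩
  have hInv : Set.InvOn (fun a => (P (χ a), χ a - P (χ a)))
      (fun p : A × A => logS K (expS K p.1 * expS K p.2)) S ((F 1 : Set A)) := by
    constructor
    · rintro ⟨x, y⟩ hp
      obtain ⟨hx1, hy1, hPx, hPy⟩ := hmem _ hp
      simp only
      set a := logS K (expS K x * expS K y) with ha
      have haF : a ∈ F 1 := hCmem _ hp
      have hPb : P (x + y) = x := by rw [map_add, hPx, hPy, add_zero]
      have hb : (x + y) = a - BCHs K (P (x + y)) ((x + y) - P (x + y)) := by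
        rw [hPb]
        have h6 : x + y - x = y := by abel
        rw [h6, ha, hCdef]
        abel
      have heq : χ a = x + y := BCHproof.fixed_unique hF P hP (hχmem a haF)
        (add_mem hx1 hy1) (hχ a haF) hb
      rw [heq, hPb]
      have h7 : x + y - x = y := by abel
      rw [h7]
    · intro a ha
      simp only
      have h := hχ a ha
      have hsum : P (χ a) + (χ a - P (χ a)) = χ a := by abel
      rw [hCdef, hsum]
      generalize hB : BCHs K (P (χ a)) (χ a - P (χ a)) = B at h ⊢
      rw [h]; abel
  exact ⟨hInv.bijOn hMapsC hMapsD, hInv⟩
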